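/- In the vortex dipole system, the two vortices never collide: along any solution, the separation satisfies r₁₂(t) > C^{4/Φ} for all t, where C² = (1 - r₁(0)²)^{Ω₀}·(1 - r₂(0)²)^{Ω₀}·r₁₂(0)^{Φ/2} > 0 is determined by the initial conditions. -/

import Mathlib

-- vortex 1 derivative value
private lemma calc1 (p q d : ℝ) (a b w : ℂ) (hd0 : d ≠ 0)
    (hEq : Complex.I * w = -(p : ℂ) * a + (q : ℂ) * (a - b) / (d : ℂ)) :
    2 * (a.re * w.re + a.im * w.im)
      = -(2 * q * (a.re * b.im - a.im * b.re)) / d := by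
  have hw : w = -Complex.I * (Complex.I * w) := by
    rw [neg_mul, ← mul_assoc, Complex.I_mul_I]; ring
  rw [hEq] at hw
  rw [hw]
  simp only [Complex.mul_re, Complex.mul_im, Complex.div_re, Complex.div_im,
    Complex.normSq_apply, Complex.add_re, Complex.add_im, Complex.sub_re,
    Complex.sub_im, Complex.neg_re, Complex.neg_im, Complex.I_re, Complex.I_im,
    Complex.ofReal_re, Complex.ofReal_im]
  field_simp
  ring

-- vortex 2 derivative value
private lemma calc2 (p q d : ℝ) (a b w : ℂ) (hd0 : d ≠ 0)
    (hEq : Complex.I * w = (p : ℂ) * b - (q : ℂ) * (b - a) / (d : ℝ)) :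
    2 * (b.re * w.re + b.im * w.im)
      = -(2 * q * (a.re * b.im - a.im * b.re)) / d := by
  have hw : w = -Complex.I * (Complex.I * w) := by
    rw [neg_mul, ← mul_assoc, Complex.I_mul_I]; ring
  rw [hEq] at hw
  rw [hw]
  simp only [Complex.mul_re, Complex.mul_im, Complex.div_re, Complex.div_im,
    Complex.normSq_apply, Complex.add_re, Complex.add_im, Complex.sub_re,
    Complex.sub_im, Complex.neg_re, Complex.neg_im, Complex.I_re, Complex.I_im,
    Complex.ofReal_re, Complex.ofReal_im]
  field_simp
  ring

-- separation derivative value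
private lemma calc3 (p₁ p₂ q d : ℝ) (a b w₁ w₂ : ℂ) (hd0 : d ≠ 0)
    (hEq1 : Complex.I * w₁ = -(p₁ : ℂ) * a + (q : ℂ) * (a - b) / (d : ℂ))
    (hEq2 : Complex.I * w₂ = (p₂ : ℂ) * b - (q : ℂ) * (b - a) / (d : ℂ)) :
    2 * ((a - b).re * (w₁ - w₂).re + (a - b).im * (w₁ - w₂).im)
      = -2 * (a.re * b.im - a.im * b.re) * (p₁ + p₂) := by
  have hw1 : w₁ = -Complex.I * (Complex.I * w₁) := by
    rw [neg_mul, ← mul_assoc, Complex.I_mul_I]; ring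
  have hw2 : w₂ = -Complex.I * (Complex.I * w₂) := by
    rw [neg_mul, ← mul_assoc, Complex.I_mul_I]; ring
  rw [hEq1] at hw1; rw [hEq2] at hw2
  rw [hw1, hw2]
  simp only [Complex.mul_re, Complex.mul_im, Complex.div_re, Complex.div_im,
    Complex.normSq_apply, Complex.add_re, Complex.add_im, Complex.sub_re,
    Complex.sub_im, Complex.neg_re, Complex.neg_im, Complex.I_re, Complex.I_im,
    Complex.ofReal_re, Complex.ofReal_im]
  field_simp
  ring


private lemma calc4 (O P S A1 A2 d : ℝ) (h1 : A1 ≠ 0) (h2 : A2 ≠ 0) (hd : d ≠ 0) :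
    O * ((0 - -(2 * (P / 2) * S) / d) / A1) + O * ((0 - -(2 * (P / 2) * S) / d) / A2)
      + P / 2 * (-2 * S * (O / A1 + O / A2) / d) = 0 := by
  field_simp
  ring

private lemma normsq_eq (z : ℂ) : ‖z‖^2 = z.re^2 + z.im^2 := by
  rw [Complex.sq_norm, Complex.normSq_apply]; ring

private lemma hasDerivAt_normSq {z : ℝ → ℂ} {w : ℂ} {t : ℝ} (hz : HasDerivAt z w t) :
    HasDerivAt (fun s => ‖z s‖^2)
      (2 * ((z t).re * w.re + (z t).im * w.im)) t := by
  have hre : HasDerivAt (fun s => (z s).re) w.re t :=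
    Complex.reCLM.hasFDerivAt.comp_hasDerivAt t hz
  have him : HasDerivAt (fun s => (z s).im) w.im t :=
    Complex.imCLM.hasFDerivAt.comp_hasDerivAt t hz
  have h := (hre.pow 2).add (him.pow 2)
  have hf : (fun s => ‖z s‖^2) = fun s => (z s).re^2 + (z s).im^2 :=
    funext fun s => normsq_eq _
  rw [hf]
  convert h using 1 <;> first | rfl | (push_cast; ring)

theorem dipole_no_collision
    (Ω₀ Φ : ℝ) (hΩ₀ : 0 < Ω₀) (hΦ : 0 < Φ)
    (z₁ z₂ : ℝ → ℂ)
    (hdisk : ∀ t, ‖z₁ t‖ < 1 ∧ ‖z₂ t‖ < 1)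
    (hsep : ∀ t, z₁ t ≠ z₂ t)
    (hdyn1 : ∀ t, ∃ w : ℂ, HasDerivAt z₁ w t ∧
      Complex.I * w
        = -((Ω₀ / (1 - ‖z₁ t‖ ^ 2) : ℝ) : ℂ) * z₁ t
          + ((Φ / 2 : ℝ) : ℂ) * (z₁ t - z₂ t) / ((‖z₁ t - z₂ t‖ ^ 2 : ℝ) : ℂ))
    (hdyn2 : ∀ t, ∃ w : ℂ, HasDerivAt z₂ w t ∧
      Complex.I * w
        = ((Ω₀ / (1 - ‖z₂ t‖ ^ 2) : ℝ) : ℂ) * z₂ t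
          - ((Φ / 2 : ℝ) : ℂ) * (z₂ t - z₁ t) / ((‖z₁ t - z₂ t‖ ^ 2 : ℝ) : ℂ)) :
    0 < (1 - ‖z₁ 0‖ ^ 2) ^ Ω₀ * (1 - ‖z₂ 0‖ ^ 2) ^ Ω₀ * ‖z₁ 0 - z₂ 0‖ ^ (Φ / 2) ∧
    ∀ t : ℝ, ‖z₁ t - z₂ t‖ >
      (Real.sqrt ((1 - ‖z₁ 0‖ ^ 2) ^ Ω₀ * (1 - ‖z₂ 0‖ ^ 2) ^ Ω₀
        * ‖z₁ 0 - z₂ 0‖ ^ (Φ / 2))) ^ (4 / Φ) := by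
  -- basic positivity facts
  have hA : ∀ t, 0 < 1 - ‖z₁ t‖ ^ 2 ∧ 0 < 1 - ‖z₂ t‖ ^ 2 := by
    intro t
    have h1 := (hdisk t).1
    have h2 := (hdisk t).2
    have n1 := norm_nonneg (z₁ t)
    have n2 := norm_nonneg (z₂ t)
    constructor <;> nlinarith
  have hAle : ∀ t, 1 - ‖z₁ t‖ ^ 2 ≤ 1 ∧ 1 - ‖z₂ t‖ ^ 2 ≤ 1 := by
    intro t
    constructor <;> nlinarith [sq_nonneg ‖z₁ t‖, sq_nonneg ‖z₂ t‖]
  have hd : ∀ t, 0 < ‖z₁ t - z₂ t‖ ^ 2 := by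
    intro t
    exact pow_pos (norm_pos_iff.mpr (sub_ne_zero.mpr (hsep t))) 2
  -- the conserved "log" quantity
  set F : ℝ → ℝ := fun s =>
    Ω₀ * Real.log (1 - ‖z₁ s‖ ^ 2) + Ω₀ * Real.log (1 - ‖z₂ s‖ ^ 2)
      + (Φ / 2) * Real.log (‖z₁ s - z₂ s‖ ^ 2) with hF
  have key : ∀ t, HasDerivAt F 0 t := by
    intro t
    obtain ⟨w₁, hw₁, he₁⟩ := hdyn1 t
    obtain ⟨w₂, hw₂, he₂⟩ := hdyn2 t
    set S := (z₁ t).re * (z₂ t).im - (z₁ t).im * (z₂ t).re with hS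
    have hA₁ := (hA t).1
    have hA₂ := (hA t).2
    have hdt := hd t
    have hder1 : HasDerivAt (fun s => ‖z₁ s‖ ^ 2)
        (-(2 * (Φ/2) * S) / ‖z₁ t - z₂ t‖ ^ 2) t := by
      have h := hasDerivAt_normSq hw₁
      rwa [calc1 (Ω₀ / (1 - ‖z₁ t‖ ^ 2)) (Φ/2) (‖z₁ t - z₂ t‖ ^ 2)
        (z₁ t) (z₂ t) w₁ (ne_of_gt hdt) he₁] at h
    have hder2 : HasDerivAt (fun s => ‖z₂ s‖ ^ 2)
        (-(2 * (Φ/2) * S) / ‖z₁ t - z₂ t‖ ^ 2) t := by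
      have h := hasDerivAt_normSq hw₂
      rwa [calc2 (Ω₀ / (1 - ‖z₂ t‖ ^ 2)) (Φ/2) (‖z₁ t - z₂ t‖ ^ 2)
        (z₁ t) (z₂ t) w₂ (ne_of_gt hdt) he₂] at h
    have hder3 : HasDerivAt (fun s => ‖z₁ s - z₂ s‖ ^ 2)
        (-2 * S * (Ω₀ / (1 - ‖z₁ t‖ ^ 2) + Ω₀ / (1 - ‖z₂ t‖ ^ 2))) t := by
      have h := hasDerivAt_normSq (z := fun s => z₁ s - z₂ s) (hw₁.sub hw₂)
      beta_reduce at h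
      rwa [calc3 (Ω₀ / (1 - ‖z₁ t‖ ^ 2)) (Ω₀ / (1 - ‖z₂ t‖ ^ 2)) (Φ/2)
        (‖z₁ t - z₂ t‖ ^ 2) (z₁ t) (z₂ t) w₁ w₂ (ne_of_gt hdt) he₁ he₂] at h
    have hl1 := (((hasDerivAt_const t (1:ℝ)).sub hder1).log (ne_of_gt hA₁)).const_mul Ω₀
    have hl2 := (((hasDerivAt_const t (1:ℝ)).sub hder2).log (ne_of_gt hA₂)).const_mul Ω₀
    have hl3 := (hder3.log (ne_of_gt hdt)).const_mul (Φ/2)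
    have htot := (hl1.add hl2).add hl3
    rw [hF]
    have h0 := calc4 Ω₀ Φ S (1 - ‖z₁ t‖ ^ 2) (1 - ‖z₂ t‖ ^ 2) (‖z₁ t - z₂ t‖ ^ 2)
      (ne_of_gt hA₁) (ne_of_gt hA₂) (ne_of_gt hdt)
    simp only [Pi.sub_apply] at htot
    rw [h0] at htot
    exact htot
  have hFdiff : Differentiable ℝ F := fun x => (key x).differentiableAt
  have hFconst : ∀ t, F t = F 0 :=
    fun t => is_const_of_deriv_eq_zero hFdiff (fun x => (key x).deriv) t 0
  -- exponentiated conserved quantity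
  have hexpF : ∀ t, Real.exp (F t)
      = (1 - ‖z₁ t‖ ^ 2) ^ Ω₀ * (1 - ‖z₂ t‖ ^ 2) ^ Ω₀ * ‖z₁ t - z₂ t‖ ^ Φ := by
    intro t
    have hA₁ := (hA t).1
    have hA₂ := (hA t).2
    have hdt := hd t
    have hn : (0:ℝ) < ‖z₁ t - z₂ t‖ := norm_pos_iff.mpr (sub_ne_zero.mpr (hsep t))
    rw [hF]
    simp only []
    rw [Real.exp_add, Real.exp_add]
    rw [Real.rpow_def_of_pos hA₁, Real.rpow_def_of_pos hA₂, Real.rpow_def_of_pos hn]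
    have : Real.log (‖z₁ t - z₂ t‖ ^ 2) = 2 * Real.log ‖z₁ t - z₂ t‖ := by
      rw [Real.log_pow]; push_cast; ring
    rw [this]
    ring_nf
  have hcons : ∀ t,
      (1 - ‖z₁ t‖ ^ 2) ^ Ω₀ * (1 - ‖z₂ t‖ ^ 2) ^ Ω₀ * ‖z₁ t - z₂ t‖ ^ Φ
        = (1 - ‖z₁ 0‖ ^ 2) ^ Ω₀ * (1 - ‖z₂ 0‖ ^ 2) ^ Ω₀ * ‖z₁ 0 - z₂ 0‖ ^ Φ := by
    intro t
    rw [← hexpF t, ← hexpF 0, hFconst t]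
  -- positivity of the constant
  have hn0 : (0:ℝ) < ‖z₁ 0 - z₂ 0‖ := norm_pos_iff.mpr (sub_ne_zero.mpr (hsep 0))
  have hP0pos : 0 < (1 - ‖z₁ 0‖ ^ 2) ^ Ω₀ * (1 - ‖z₂ 0‖ ^ 2) ^ Ω₀ :=
    mul_pos (Real.rpow_pos_of_pos (hA 0).1 _) (Real.rpow_pos_of_pos (hA 0).2 _)
  have hP0le : (1 - ‖z₁ 0‖ ^ 2) ^ Ω₀ * (1 - ‖z₂ 0‖ ^ 2) ^ Ω₀ ≤ 1 := by
    have h1 : (1 - ‖z₁ 0‖ ^ 2) ^ Ω₀ ≤ 1 :=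
      Real.rpow_le_one (le_of_lt (hA 0).1) (hAle 0).1 (le_of_lt hΩ₀)
    have h2 : (1 - ‖z₂ 0‖ ^ 2) ^ Ω₀ ≤ 1 :=
      Real.rpow_le_one (le_of_lt (hA 0).2) (hAle 0).2 (le_of_lt hΩ₀)
    have := Real.rpow_pos_of_pos (hA 0).1 Ω₀
    nlinarith
  constructor
  · exact mul_pos hP0pos (Real.rpow_pos_of_pos hn0 _)
  intro t
  have hnt : (0:ℝ) < ‖z₁ t - z₂ t‖ := norm_pos_iff.mpr (sub_ne_zero.mpr (hsep t))
  -- at time t, the disk factor product is < 1 strictly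
  have hPtlt : (1 - ‖z₁ t‖ ^ 2) ^ Ω₀ * (1 - ‖z₂ t‖ ^ 2) ^ Ω₀ < 1 := by
    have hne : z₁ t ≠ 0 ∨ z₂ t ≠ 0 := by
      by_contra h
      push_neg at h
      exact hsep t (h.1.trans h.2.symm)
    have p1 := Real.rpow_pos_of_pos (hA t).1 Ω₀
    have p2 := Real.rpow_pos_of_pos (hA t).2 Ω₀
    have l1 : (1 - ‖z₁ t‖ ^ 2) ^ Ω₀ ≤ 1 :=
      Real.rpow_le_one (le_of_lt (hA t).1) (hAle t).1 (le_of_lt hΩ₀)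
    have l2 : (1 - ‖z₂ t‖ ^ 2) ^ Ω₀ ≤ 1 :=
      Real.rpow_le_one (le_of_lt (hA t).2) (hAle t).2 (le_of_lt hΩ₀)
    rcases hne with h | h
    · have : 0 < ‖z₁ t‖ := norm_pos_iff.mpr h
      have hlt : 1 - ‖z₁ t‖ ^ 2 < 1 := by nlinarith
      have s1 : (1 - ‖z₁ t‖ ^ 2) ^ Ω₀ < 1 :=
        Real.rpow_lt_one (le_of_lt (hA t).1) hlt hΩ₀
      nlinarith
    · have : 0 < ‖z₂ t‖ := norm_pos_iff.mpr h
      have hlt : 1 - ‖z₂ t‖ ^ 2 < 1 := by nlinarith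
      have s2 : (1 - ‖z₂ t‖ ^ 2) ^ Ω₀ < 1 :=
        Real.rpow_lt_one (le_of_lt (hA t).2) hlt hΩ₀
      nlinarith
  -- key inequality at level of Φ-th powers
  have hpow : ‖z₁ t - z₂ t‖ ^ Φ
      > (1 - ‖z₁ 0‖ ^ 2) ^ Ω₀ * (1 - ‖z₂ 0‖ ^ 2) ^ Ω₀ * ‖z₁ 0 - z₂ 0‖ ^ Φ := by
    rw [← hcons t]
    have hd0 : (0:ℝ) < ‖z₁ t - z₂ t‖ ^ Φ := Real.rpow_pos_of_pos hnt _
    nlinarith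
  -- take Φ⁻¹-th powers
  have hstep : ‖z₁ t - z₂ t‖
      > ((1 - ‖z₁ 0‖ ^ 2) ^ Ω₀ * (1 - ‖z₂ 0‖ ^ 2) ^ Ω₀) ^ (1/Φ) * ‖z₁ 0 - z₂ 0‖ := by
    calc ((1 - ‖z₁ 0‖ ^ 2) ^ Ω₀ * (1 - ‖z₂ 0‖ ^ 2) ^ Ω₀) ^ (1/Φ) * ‖z₁ 0 - z₂ 0‖
        = ((1 - ‖z₁ 0‖ ^ 2) ^ Ω₀ * (1 - ‖z₂ 0‖ ^ 2) ^ Ω₀ * ‖z₁ 0 - z₂ 0‖ ^ Φ) ^ (1/Φ) := by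
          rw [Real.mul_rpow (le_of_lt hP0pos) (by positivity),
            ← Real.rpow_mul (le_of_lt hn0),
            show Φ * (1/Φ) = 1 by field_simp, Real.rpow_one]
      _ < (‖z₁ t - z₂ t‖ ^ Φ) ^ (1/Φ) :=
          Real.rpow_lt_rpow (by positivity) hpow (by positivity)
      _ = ‖z₁ t - z₂ t‖ := by
          rw [← Real.rpow_mul (le_of_lt hnt), show Φ * (1/Φ) = 1 by field_simp,
            Real.rpow_one]
  -- rewrite the RHS of the goal
  have hrhs : (Real.sqrt ((1 - ‖z₁ 0‖ ^ 2) ^ Ω₀ * (1 - ‖z₂ 0‖ ^ 2) ^ Ω₀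
        * ‖z₁ 0 - z₂ 0‖ ^ (Φ / 2))) ^ (4 / Φ)
      = ((1 - ‖z₁ 0‖ ^ 2) ^ Ω₀ * (1 - ‖z₂ 0‖ ^ 2) ^ Ω₀) ^ (2/Φ) * ‖z₁ 0 - z₂ 0‖ := by
    have hXpos : (0:ℝ) < (1 - ‖z₁ 0‖ ^ 2) ^ Ω₀ * (1 - ‖z₂ 0‖ ^ 2) ^ Ω₀
        * ‖z₁ 0 - z₂ 0‖ ^ (Φ / 2) :=
      mul_pos hP0pos (Real.rpow_pos_of_pos hn0 _)
    rw [Real.sqrt_eq_rpow, ← Real.rpow_mul (le_of_lt hXpos),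
      show (1:ℝ)/2 * (4/Φ) = 2/Φ by field_simp; ring,
      Real.mul_rpow (le_of_lt hP0pos) (by positivity),
      ← Real.rpow_mul (le_of_lt hn0),
      show Φ/2 * (2/Φ) = 1 by field_simp, Real.rpow_one]
  rw [hrhs]
  -- it remains to compare exponents 2/Φ and 1/Φ
  have hmono : ((1 - ‖z₁ 0‖ ^ 2) ^ Ω₀ * (1 - ‖z₂ 0‖ ^ 2) ^ Ω₀) ^ (2/Φ)
      ≤ ((1 - ‖z₁ 0‖ ^ 2) ^ Ω₀ * (1 - ‖z₂ 0‖ ^ 2) ^ Ω₀) ^ (1/Φ) :=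
    Real.rpow_le_rpow_of_exponent_ge hP0pos hP0le (by
      rw [div_le_div_iff_of_pos_right hΦ]; nlinarith)
  calc ((1 - ‖z₁ 0‖ ^ 2) ^ Ω₀ * (1 - ‖z₂ 0‖ ^ 2) ^ Ω₀) ^ (2/Φ) * ‖z₁ 0 - z₂ 0‖
      ≤ ((1 - ‖z₁ 0‖ ^ 2) ^ Ω₀ * (1 - ‖z₂ 0‖ ^ 2) ^ Ω₀) ^ (1/Φ) * ‖z₁ 0 - z₂ 0‖ :=
        mul_le_mul_of_nonneg_right hmono (le_of_lt hn0)
    _ < ‖z₁ t - z₂ t‖ := hstep
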